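/- An element a of a general ring I is strongly π-regular if and only if there exists b ∈ comm²(a) with ab² = b and a²b - a nilpotent. -/

import Mathlib

variable {I : Type*} [NonUnitalRing I]

/-- quasiregular elements: p * q = 0 = q * p with p*q = p+q-pq -/
def inQ (a : I) : Prop := ∃ p : I, p + a - p * a = 0 ∧ a + p - a * p = 0

def inQN (a : I) : Prop := ∀ x : I, a * x = x * a → inQ (a * x)

def inComm2 (a x : I) : Prop := ∀ y : I, y * a = a * y → x * y = y * x

def IsQuasipolarElem (a : I) : Prop :=
  ∃ p : I, p * p = p ∧ inComm2 a p ∧ inQ (a + p) ∧ inQN (a - a * p)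

/-- pw a n = a^(n+1) -/
def pw (a : I) : ℕ → I
  | 0 => a
  | n + 1 => pw a n * a

def IsSPiReg (a : I) : Prop := ∃ n : ℕ, ∃ x : I, a * x = x * a ∧ pw a n = pw a (n + 1) * x

def IsNilp (a : I) : Prop := ∃ n : ℕ, pw a n = 0

def IsStrReg (a : I) : Prop := ∃ b : I, a * b = b * a ∧ a = a * b * a

/-! ### auxiliary lemmas -/

lemma aux_inr_pw (a : I) : ∀ n, ((pw a n : I) : Unitization ℤ I) = (a : Unitization ℤ I) ^ (n + 1)
  | 0 => by simp [pw]
  | n + 1 => by rw [pw, Unitization.inr_mul, aux_inr_pw a n]; exact (pow_succ _ _).symm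

/-- reduction lemma: `A^N = A^(N+1) X` implies `A^(N+k) X^k = A^N`. -/
lemma aux_red {R : Type*} [CommRing R] (A X : R) (N : ℕ)
    (hN : A ^ N = A ^ (N + 1) * X) : ∀ k, A ^ (N + k) * X ^ k = A ^ N := by
  intro k
  induction k with
  | zero => simp
  | succ k ih =>
    have h1 : A ^ (N + (k + 1)) * X ^ (k + 1) = (A ^ (N + k) * X ^ k) * (A * X) := by ring
    rw [h1, ih]
    calc A ^ N * (A * X) = A ^ (N + 1) * X := by ring
      _ = A ^ N := hN.symm

/-- powers of `A - A²B` when `AB² = B`. -/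
lemma aux_cpow {R : Type*} [CommRing R] (A B : R) (h : A * (B * B) = B) :
    ∀ k, (A - A * A * B) ^ (k + 1) = A ^ (k + 1) - A ^ (k + 2) * B := by
  intro k
  induction k with
  | zero => ring_nf
  | succ k ih =>
    have h1 : (A - A * A * B) ^ (k + 1 + 1) = (A - A * A * B) ^ (k + 1) * (A - A * A * B) := by
      ring
    rw [h1, ih]
    linear_combination (A ^ (k + 3)) * h

lemma aux_idem_pow {M : Type*} [Monoid M] (e : M) (he : e * e = e) : ∀ k, e ^ (k + 1) = e := by
  intro k
  induction k with
  | zero => simp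
  | succ k ih => rw [pow_succ, ih, he]

/-- corner-ring argument: if `v` and `g` are mutually inverse relative to the idempotent `E`
and `Y` commutes with `v`, then `Y` commutes with `g`. -/
lemma aux_corner {R : Type*} [Ring R] (E v g Y : R) (hvg : v * g = E) (hgv : g * v = E)
    (hEv : E * v = v) (hvE : v * E = v) (hEg : E * g = g) (hgE : g * E = g)
    (hYv : Y * v = v * Y) : Y * g = g * Y := by
  have hEY : E * Y = g * Y * v :=
    calc E * Y = g * v * Y := by rw [hgv]
      _ = g * (v * Y) := mul_assoc g v Y
      _ = g * (Y * v) := by rw [hYv]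
      _ = g * Y * v := (mul_assoc g Y v).symm
  have hYE : Y * E = v * (Y * g) :=
    calc Y * E = Y * (v * g) := by rw [hvg]
      _ = Y * v * g := (mul_assoc Y v g).symm
      _ = v * Y * g := by rw [hYv]
      _ = v * (Y * g) := mul_assoc v Y g
  have h1 : E * (Y * E) = Y * E :=
    calc E * (Y * E) = E * (v * (Y * g)) := by rw [hYE]
      _ = E * v * (Y * g) := (mul_assoc E v _).symm
      _ = v * (Y * g) := by rw [hEv]
      _ = Y * E := hYE.symm
  have h2 : E * Y * E = E * Y :=
    calc E * Y * E = g * Y * v * E := by rw [hEY]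
      _ = g * Y * (v * E) := mul_assoc (g * Y) v E
      _ = g * Y * v := by rw [hvE]
      _ = E * Y := hEY.symm
  have hc : E * Y = Y * E :=
    calc E * Y = E * Y * E := h2.symm
      _ = E * (Y * E) := mul_assoc E Y E
      _ = Y * E := h1
  calc Y * g = Y * (E * g) := by rw [hEg]
    _ = Y * E * g := (mul_assoc Y E g).symm
    _ = E * Y * g := by rw [hc]
    _ = g * Y * v * g := by rw [hEY]
    _ = g * Y * (v * g) := mul_assoc (g * Y) v g
    _ = g * Y * E := by rw [hvg]
    _ = g * (Y * E) := mul_assoc g Y E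
    _ = g * (E * Y) := by rw [hc]
    _ = g * E * Y := (mul_assoc g E Y).symm
    _ = g * Y := by rw [hgE]

theorem stmt8 (a : I) :
    IsSPiReg a ↔ ∃ b : I, inComm2 a b ∧ a * (b * b) = b ∧ IsNilp (a * a * b - a) := by
  classical
  constructor
  · rintro ⟨n, x, hax, hpow⟩
    set R := Unitization ℤ I with hR
    let A : R := a
    let X : R := x
    have hAX : A * X = X * A := by
      show (a : R) * x = (x : R) * a
      rw [← Unitization.inr_mul, ← Unitization.inr_mul, hax]
    have hNR : A ^ (n + 1) = A ^ (n + 1 + 1) * X := by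
      have h := congrArg (fun z : I => (z : R)) hpow
      simpa only [Unitization.inr_mul, aux_inr_pw] using h
    have hcomm : ∀ u ∈ ({A, X} : Set R), ∀ v ∈ ({A, X} : Set R), u * v = v * u := by
      rintro u hu v hv
      rcases hu with rfl | rfl <;> rcases hv with rfl | rfl
      · rfl
      · exact hAX
      · exact hAX.symm
      · rfl
    letI : CommRing (Subring.closure ({A, X} : Set R)) := Subring.closureCommRingOfComm (R := R) (s := ({A, X} : Set R)) hcomm
    let A₀ : Subring.closure ({A, X} : Set R) :=
      ⟨A, Subring.subset_closure (by left; rfl)⟩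
    let X₀ : Subring.closure ({A, X} : Set R) :=
      ⟨X, Subring.subset_closure (by right; rfl)⟩
    have hval : ∀ {s t : Subring.closure ({A, X} : Set R)}, s = t → (s : R) = (t : R) :=
      fun h => congrArg Subtype.val h
    have hN₀ : A₀ ^ (n + 1) = A₀ ^ (n + 1 + 1) * X₀ := by
      apply Subtype.ext
      push_cast
      exact hNR
    have red := aux_red A₀ X₀ (n + 1) hN₀
    set B₀ := A₀ ^ (n + 1) * X₀ ^ (n + 2) with hB₀
    -- facts in the commutative subring
    have f1 : A₀ * (B₀ * B₀) = B₀ := by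
      calc A₀ * (B₀ * B₀)
          = (A₀ ^ ((n + 1) + (n + 2)) * X₀ ^ (n + 2)) * X₀ ^ (n + 2) := by rw [hB₀]; ring
        _ = A₀ ^ (n + 1) * X₀ ^ (n + 2) := by rw [red (n + 2)]
        _ = B₀ := rfl
    have f2 : A₀ ^ (n + 2) * B₀ = A₀ ^ (n + 1) := by
      calc A₀ ^ (n + 2) * B₀ = A₀ ^ ((n + 1) + (n + 2)) * X₀ ^ (n + 2) := by rw [hB₀]; ring
        _ = A₀ ^ (n + 1) := red (n + 2)
    have f3 : A₀ ^ (n + 3) * B₀ = A₀ ^ (n + 2) := by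
      calc A₀ ^ (n + 3) * B₀ = A₀ * (A₀ ^ (n + 2) * B₀) := by ring
        _ = A₀ * A₀ ^ (n + 1) := by rw [f2]
        _ = A₀ ^ (n + 2) := by ring
    set E₀ := A₀ * B₀ with hE₀
    have hE2 : E₀ * E₀ = E₀ := by rw [hE₀]; linear_combination A₀ * f1
    have hEN := aux_idem_pow E₀ hE2
    have hEB : E₀ * B₀ = B₀ := by
      calc E₀ * B₀ = A₀ * (B₀ * B₀) := by rw [hE₀]; ring
        _ = B₀ := f1
    have s_vg2 : A₀ ^ (n + 2) * B₀ ^ (n + 2) = E₀ := by rw [← mul_pow]; exact hEN (n + 1)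
    have s_Ev2 : E₀ * A₀ ^ (n + 2) = A₀ ^ (n + 2) := by
      calc E₀ * A₀ ^ (n + 2) = A₀ ^ (n + 3) * B₀ := by rw [hE₀]; ring
        _ = A₀ ^ (n + 2) := f3
    have s_Eg2 : E₀ * B₀ ^ (n + 2) = B₀ ^ (n + 2) := by
      calc E₀ * B₀ ^ (n + 2) = (E₀ * B₀) * B₀ ^ (n + 1) := by ring
        _ = B₀ * B₀ ^ (n + 1) := by rw [hEB]
        _ = B₀ ^ (n + 2) := by ring
    have s_rep : B₀ ^ (n + 2) * A₀ ^ (n + 1) = B₀ := by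
      calc B₀ ^ (n + 2) * A₀ ^ (n + 1) = B₀ * (A₀ * B₀) ^ (n + 1) := by ring
        _ = B₀ * E₀ := by rw [← hE₀, hEN n]
        _ = E₀ * B₀ := mul_comm _ _
        _ = B₀ := hEB
    have s_nil : (A₀ * A₀ * B₀ - A₀) ^ (n + 1) = 0 := by
      have h0 : (A₀ - A₀ * A₀ * B₀) ^ (n + 1) = 0 := by
        rw [aux_cpow A₀ B₀ f1 n, sub_eq_zero]
        exact f2.symm
      rw [← neg_sub, neg_pow, h0, mul_zero]
    -- value-level versions
    set Br : R := (B₀ : R) with hBr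
    have hBb : ((pw a n * pw x (n + 1) : I) : R) = Br := by
      rw [Unitization.inr_mul, aux_inr_pw, aux_inr_pw, hBr, hB₀]
      push_cast
      rfl
    have cf1 : A * (Br * Br) = Br := by
      have h := hval f1; push_cast at h; exact h
    have cvg2 : A ^ (n + 2) * Br ^ (n + 2) = A * Br := by
      have h := hval s_vg2; push_cast at h; exact h
    have cvg2' : Br ^ (n + 2) * A ^ (n + 2) = A * Br := by
      have h := hval ((mul_comm (B₀ ^ (n + 2)) (A₀ ^ (n + 2))).trans s_vg2)
      push_cast at h; exact h
    have cEv2 : (A * Br) * A ^ (n + 2) = A ^ (n + 2) := by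
      have h := hval s_Ev2; push_cast at h; exact h
    have cvE2 : A ^ (n + 2) * (A * Br) = A ^ (n + 2) := by
      have h := hval ((mul_comm (A₀ ^ (n + 2)) E₀).trans s_Ev2)
      push_cast at h; exact h
    have cEg2 : (A * Br) * Br ^ (n + 2) = Br ^ (n + 2) := by
      have h := hval s_Eg2; push_cast at h; exact h
    have cgE2 : Br ^ (n + 2) * (A * Br) = Br ^ (n + 2) := by
      have h := hval ((mul_comm (B₀ ^ (n + 2)) E₀).trans s_Eg2)
      push_cast at h; exact h
    have crep : Br ^ (n + 2) * A ^ (n + 1) = Br := by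
      have h := hval s_rep; push_cast at h; exact h
    have cnil : (A * A * Br - A) ^ (n + 1) = (0 : R) := by
      have h := hval s_nil; push_cast at h; exact h
    refine ⟨pw a n * pw x (n + 1), ?_, ?_, ?_⟩
    · -- inComm2
      intro y hy
      let Y : R := y
      have hYA : Y * A = A * Y := by
        show (y : R) * a = (a : R) * y
        rw [← Unitization.inr_mul, ← Unitization.inr_mul, hy]
      have hYAk : ∀ k : ℕ, Y * A ^ k = A ^ k * Y := fun k =>
        ((Commute.pow_right (M := R) (a := Y) (b := A) (by exact hYA) k) : _)
      have hYg2 : Y * Br ^ (n + 2) = Br ^ (n + 2) * Y :=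
        aux_corner (A * Br) (A ^ (n + 2)) (Br ^ (n + 2)) Y cvg2 cvg2' cEv2 cvE2 cEg2 cgE2
          (hYAk (n + 2))
      have hfin : Y * Br = Br * Y := by
        calc Y * Br = Y * (Br ^ (n + 2) * A ^ (n + 1)) := by rw [crep]
          _ = Y * Br ^ (n + 2) * A ^ (n + 1) := (mul_assoc Y (Br ^ (n + 2)) (A ^ (n + 1))).symm
          _ = Br ^ (n + 2) * Y * A ^ (n + 1) := by rw [hYg2]
          _ = Br ^ (n + 2) * (Y * A ^ (n + 1)) := mul_assoc (Br ^ (n + 2)) Y (A ^ (n + 1))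
          _ = Br ^ (n + 2) * (A ^ (n + 1) * Y) := by rw [hYAk (n + 1)]
          _ = Br ^ (n + 2) * A ^ (n + 1) * Y := (mul_assoc (Br ^ (n + 2)) (A ^ (n + 1)) Y).symm
          _ = Br * Y := by rw [crep]
      apply Unitization.inr_injective (R := ℤ)
      show ((pw a n * pw x (n + 1)) * y : I) = ((y * (pw a n * pw x (n + 1)) : I) : R)
      rw [Unitization.inr_mul (R := ℤ) (a₁ := pw a n * pw x (n + 1)) (a₂ := y),
        Unitization.inr_mul (R := ℤ) (a₁ := y) (a₂ := pw a n * pw x (n + 1)), hBb]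
      exact hfin.symm
    · -- a * (b * b) = b
      apply Unitization.inr_injective (R := ℤ)
      rw [Unitization.inr_mul, Unitization.inr_mul, hBb]
      exact cf1
    · -- nilpotency
      refine ⟨n, ?_⟩
      apply Unitization.inr_injective (R := ℤ)
      rw [aux_inr_pw, Unitization.inr_zero]
      have : ((a * a * (pw a n * pw x (n + 1)) - a : I) : R) = A * A * Br - A := by
        rw [Unitization.inr_sub, Unitization.inr_mul, Unitization.inr_mul, hBb]
      rw [this]
      exact cnil
  · rintro ⟨b, hb2, hab, m, hm⟩
    set R := Unitization ℤ I with hR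
    let A : R := a
    let B : R := b
    have hba : b * a = a * b := hb2 a rfl
    have hAB : A * B = B * A := by
      show (a : R) * b = (b : R) * a
      rw [← Unitization.inr_mul, ← Unitization.inr_mul, hba]
    have hcomm : ∀ u ∈ ({A, B} : Set R), ∀ v ∈ ({A, B} : Set R), u * v = v * u := by
      rintro u hu v hv
      rcases hu with rfl | rfl <;> rcases hv with rfl | rfl
      · rfl
      · exact hAB
      · exact hAB.symm
      · rfl
    letI : CommRing (Subring.closure ({A, B} : Set R)) := Subring.closureCommRingOfComm (R := R) (s := ({A, B} : Set R)) hcomm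
    let A₀ : Subring.closure ({A, B} : Set R) :=
      ⟨A, Subring.subset_closure (by left; rfl)⟩
    let B₀ : Subring.closure ({A, B} : Set R) :=
      ⟨B, Subring.subset_closure (by right; rfl)⟩
    have f1 : A₀ * (B₀ * B₀) = B₀ := by
      apply Subtype.ext
      push_cast
      show (a : R) * ((b : R) * b) = (b : R)
      rw [← Unitization.inr_mul, ← Unitization.inr_mul, hab]
    have hnilR : (A * A * B - A) ^ (m + 1) = (0 : R) := by
      have h := congrArg (fun z : I => (z : R)) hm
      simp only [aux_inr_pw, Unitization.inr_zero, Unitization.inr_sub,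
        Unitization.inr_mul] at h
      exact h
    have hnil₀ : (A₀ * A₀ * B₀ - A₀) ^ (m + 1) = 0 := by
      apply Subtype.ext
      push_cast
      exact hnilR
    have h0 : (A₀ - A₀ * A₀ * B₀) ^ (m + 1) = 0 := by
      rw [← neg_sub (A₀ * A₀ * B₀), neg_pow, hnil₀, mul_zero]
    have key : A₀ ^ (m + 1) = A₀ ^ (m + 2) * B₀ := by
      have := aux_cpow A₀ B₀ f1 m
      rw [h0] at this
      rw [← sub_eq_zero]
      exact this.symm
    have keyR : A ^ (m + 1) = A ^ (m + 2) * B := by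
      have h := congrArg Subtype.val key
      push_cast at h
      exact h
    refine ⟨m, b, hba.symm, ?_⟩
    apply Unitization.inr_injective (R := ℤ)
    rw [Unitization.inr_mul, aux_inr_pw, aux_inr_pw]
    exact keyR
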